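/- Let A, B, C, D be finite-valued random variables. If I(B; D | C, A) = 0 and I(A; C) ≥ I(A; C | B), then I(A; (C, D)) ≥ I(A; (C, D) | B). -/

import Mathlib

open scoped BigOperators

noncomputable section

/-- Probability that the random variable `X` takes the value `a`,
with respect to the probability mass function `p` on the finite sample space `Ω`. -/
def prob {Ω : Type*} [Fintype Ω] {α : Type*} [DecidableEq α]
    (p : Ω → ℝ) (X : Ω → α) (a : α) : ℝ :=
  ∑ ω, if X ω = a then p ω else 0

/-- Shannon entropy (base 2) of the random variable `X`. -/
def ent {Ω : Type*} [Fintype Ω] {α : Type*} [Fintype α] [DecidableEq α]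
    (p : Ω → ℝ) (X : Ω → α) : ℝ :=
  -∑ a, prob p X a * Real.logb 2 (prob p X a)

/-- Conditional entropy `H(X|Y)`. -/
def condEnt {Ω : Type*} [Fintype Ω] {α β : Type*} [Fintype α] [DecidableEq α]
    [Fintype β] [DecidableEq β] (p : Ω → ℝ) (X : Ω → α) (Y : Ω → β) : ℝ :=
  ent p (fun ω => (X ω, Y ω)) - ent p Y

/-- Mutual information `I(X;Y)`. -/
def mi {Ω : Type*} [Fintype Ω] {α β : Type*} [Fintype α] [DecidableEq α]
    [Fintype β] [DecidableEq β] (p : Ω → ℝ) (X : Ω → α) (Y : Ω → β) : ℝ :=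
  ent p X + ent p Y - ent p (fun ω => (X ω, Y ω))

/-- Conditional mutual information `I(X;Y|Z)`. -/
def cmi {Ω : Type*} [Fintype Ω] {α β γ : Type*} [Fintype α] [DecidableEq α]
    [Fintype β] [DecidableEq β] [Fintype γ] [DecidableEq γ]
    (p : Ω → ℝ) (X : Ω → α) (Y : Ω → β) (Z : Ω → γ) : ℝ :=
  ent p (fun ω => (X ω, Z ω)) + ent p (fun ω => (Y ω, Z ω))
    - ent p (fun ω => (X ω, Y ω, Z ω)) - ent p Z

lemma prob_nonneg' {Ω : Type*} [Fintype Ω] {α : Type*} [DecidableEq α]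
    (p : Ω → ℝ) (hp : ∀ ω, 0 ≤ p ω) (X : Ω → α) (a : α) : 0 ≤ prob p X a := by
  apply Finset.sum_nonneg; intro ω _; split <;> simp [hp ω]

lemma ent_inj {Ω : Type*} [Fintype Ω] {α β : Type*} [Fintype α] [DecidableEq α]
    [Fintype β] [DecidableEq β] (p : Ω → ℝ) (f : α → β) (hf : Function.Injective f)
    (X : Ω → α) : ent p (fun ω => f (X ω)) = ent p X := by
  have hprob : ∀ a, prob p (fun ω => f (X ω)) (f a) = prob p X a := by
    intro a; unfold prob; congr 1; ext ω
    simp [hf.eq_iff]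
  unfold ent
  congr 1
  set F : β → ℝ := fun b => prob p (fun ω => f (X ω)) b
    * Real.logb 2 (prob p (fun ω => f (X ω)) b) with hF
  calc ∑ b : β, F b = ∑ b ∈ Finset.univ.image f, F b := by
        refine (Finset.sum_subset (Finset.subset_univ _) ?_).symm
        intro b _ hb
        have : prob p (fun ω => f (X ω)) b = 0 := by
          apply Finset.sum_eq_zero; intro ω _
          have : f (X ω) ≠ b := fun h => hb (Finset.mem_image.2 ⟨X ω, Finset.mem_univ _, h⟩)
          simp [this]
        simp [hF, this]
    _ = ∑ a : α, F (f a) := Finset.sum_image (fun a _ b _ h => hf h)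
    _ = ∑ a : α, prob p X a * Real.logb 2 (prob p X a) := by simp [hF, hprob]

lemma key_pt (r s1 s2 s3 : ℝ) (hr : 0 ≤ r)
    (h1 : r ≤ s1) (h2 : r ≤ s2) (h3 : s1 ≤ s3) (hs1 : 0 ≤ s1) (hs2 : 0 ≤ s2) :
    r * Real.logb 2 s1 + r * Real.logb 2 s2 - r * Real.logb 2 r - r * Real.logb 2 s3
      ≤ (s1 * s2 * s3⁻¹ - r) / Real.log 2 := by
  have hL0 : (0:ℝ) < Real.log 2 := by positivity
  rcases eq_or_lt_of_le hr with h0 | h0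
  · have hs3 : 0 ≤ s3 := le_trans hs1 h3
    rw [← h0]
    simp only [zero_mul, sub_zero, add_zero, zero_add]
    positivity
  · have hs1' : 0 < s1 := lt_of_lt_of_le h0 h1
    have hs2' : 0 < s2 := lt_of_lt_of_le h0 h2
    have hs3' : 0 < s3 := lt_of_lt_of_le hs1' h3
    have key : Real.log (s1 * s2 / (r * s3)) ≤ s1 * s2 / (r * s3) - 1 :=
      Real.log_le_sub_one_of_pos (by positivity)
    have hmul : r * Real.log (s1 * s2 / (r * s3)) ≤ s1 * s2 * s3⁻¹ - r :=
      calc r * Real.log (s1 * s2 / (r * s3)) ≤ r * (s1 * s2 / (r * s3) - 1) :=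
            mul_le_mul_of_nonneg_left key (le_of_lt h0)
        _ = s1 * s2 * s3⁻¹ - r := by field_simp
    have e2 : r * Real.log (s1 * s2 / (r * s3))
        = r * Real.log s1 + r * Real.log s2 - r * Real.log r - r * Real.log s3 := by
      rw [Real.log_div (by positivity) (by positivity),
        Real.log_mul (by positivity) (by positivity),
        Real.log_mul (ne_of_gt h0) (by positivity)]
      ring
    simp only [Real.logb]
    rw [show r * (Real.log s1 / Real.log 2) + r * (Real.log s2 / Real.log 2)
        - r * (Real.log r / Real.log 2) - r * (Real.log s3 / Real.log 2)
        = (r * Real.log s1 + r * Real.log s2 - r * Real.log r - r * Real.log s3) / Real.log 2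
      from by ring]
    exact (div_le_div_iff_of_pos_right hL0).mpr (by linarith [hmul, e2])

lemma key_sum {α β γ : Type*} [Fintype α] [Fintype β] [Fintype γ]
    (r : α → β → γ → ℝ) (hr : ∀ x y z, 0 ≤ r x y z) :
    ∑ x, ∑ z, (∑ y, r x y z) * Real.logb 2 (∑ y, r x y z)
      + ∑ y, ∑ z, (∑ x, r x y z) * Real.logb 2 (∑ x, r x y z)
    ≤ (∑ x, ∑ y, ∑ z, r x y z * Real.logb 2 (r x y z))
      + ∑ z, (∑ x, ∑ y, r x y z) * Real.logb 2 (∑ x, ∑ y, r x y z) := by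
  classical
  set s1 : α → γ → ℝ := fun x z => ∑ y, r x y z with hs1
  set s2 : β → γ → ℝ := fun y z => ∑ x, r x y z with hs2
  set s3 : γ → ℝ := fun z => ∑ x, ∑ y, r x y z with hs3
  have hs1n : ∀ x z, 0 ≤ s1 x z := fun x z => Finset.sum_nonneg fun y _ => hr x y z
  have hs2n : ∀ y z, 0 ≤ s2 y z := fun y z => Finset.sum_nonneg fun x _ => hr x y z
  have e1 : ∑ x, ∑ z, s1 x z * Real.logb 2 (s1 x z)
      = ∑ x, ∑ y, ∑ z, r x y z * Real.logb 2 (s1 x z) := by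
    refine Finset.sum_congr rfl fun x _ => ?_
    rw [Finset.sum_comm]
    exact Finset.sum_congr rfl fun z _ => Finset.sum_mul _ _ _
  have e2 : ∑ y, ∑ z, s2 y z * Real.logb 2 (s2 y z)
      = ∑ x, ∑ y, ∑ z, r x y z * Real.logb 2 (s2 y z) := by
    calc ∑ y, ∑ z, s2 y z * Real.logb 2 (s2 y z)
        = ∑ y, ∑ z, ∑ x, r x y z * Real.logb 2 (s2 y z) :=
          Finset.sum_congr rfl fun y _ => Finset.sum_congr rfl fun z _ => Finset.sum_mul _ _ _
      _ = ∑ y, ∑ x, ∑ z, r x y z * Real.logb 2 (s2 y z) :=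
          Finset.sum_congr rfl fun y _ => Finset.sum_comm
      _ = ∑ x, ∑ y, ∑ z, r x y z * Real.logb 2 (s2 y z) := Finset.sum_comm
  have e3 : ∑ z, s3 z * Real.logb 2 (s3 z)
      = ∑ x, ∑ y, ∑ z, r x y z * Real.logb 2 (s3 z) := by
    calc ∑ z, s3 z * Real.logb 2 (s3 z)
        = ∑ z, ∑ x, ∑ y, r x y z * Real.logb 2 (s3 z) := by
          refine Finset.sum_congr rfl fun z _ => ?_
          rw [Finset.sum_mul]
          exact Finset.sum_congr rfl fun x _ => Finset.sum_mul _ _ _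
      _ = ∑ x, ∑ z, ∑ y, r x y z * Real.logb 2 (s3 z) := Finset.sum_comm
      _ = ∑ x, ∑ y, ∑ z, r x y z * Real.logb 2 (s3 z) :=
          Finset.sum_congr rfl fun x _ => Finset.sum_comm
  have hr_sum : ∑ x, ∑ y, ∑ z, r x y z = ∑ z, s3 z := by
    calc ∑ x, ∑ y, ∑ z, r x y z = ∑ x, ∑ z, ∑ y, r x y z :=
          Finset.sum_congr rfl fun x _ => Finset.sum_comm
      _ = ∑ z, ∑ x, ∑ y, r x y z := Finset.sum_comm
  have hs3_alt1 : ∀ z, ∑ x, s1 x z = s3 z := fun z => rfl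
  have hs3_alt2 : ∀ z, ∑ y, s2 y z = s3 z := fun z => Finset.sum_comm
  have hzero : ∑ x, ∑ y, ∑ z, (s1 x z * s2 y z * (s3 z)⁻¹ - r x y z) = 0 := by
    have hA : ∑ x, ∑ y, ∑ z, s1 x z * s2 y z * (s3 z)⁻¹ = ∑ z, s3 z := by
      calc ∑ x, ∑ y, ∑ z, s1 x z * s2 y z * (s3 z)⁻¹
          = ∑ x, ∑ z, ∑ y, s1 x z * s2 y z * (s3 z)⁻¹ :=
            Finset.sum_congr rfl fun x _ => Finset.sum_comm
        _ = ∑ z, ∑ x, ∑ y, s1 x z * s2 y z * (s3 z)⁻¹ := Finset.sum_comm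
        _ = ∑ z, s3 z := by
            refine Finset.sum_congr rfl fun z _ => ?_
            have : ∑ x, ∑ y, s1 x z * s2 y z * (s3 z)⁻¹
                = (∑ x, s1 x z) * (∑ y, s2 y z) * (s3 z)⁻¹ := by
              rw [Finset.sum_mul_sum, Finset.sum_mul]
              exact (Finset.sum_congr rfl fun x _ => Finset.sum_mul _ _ _).symm
            rw [this, hs3_alt1, hs3_alt2]
            rcases eq_or_ne (s3 z) 0 with h | h
            · simp [h]
            · field_simp
    simp only [Finset.sum_sub_distrib]
    rw [hA, hr_sum, sub_self]
  have main : ∑ x, ∑ y, ∑ z,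
      (r x y z * Real.logb 2 (s1 x z) + r x y z * Real.logb 2 (s2 y z)
        - r x y z * Real.logb 2 (r x y z) - r x y z * Real.logb 2 (s3 z)) ≤ 0 := by
    calc ∑ x, ∑ y, ∑ z,
        (r x y z * Real.logb 2 (s1 x z) + r x y z * Real.logb 2 (s2 y z)
          - r x y z * Real.logb 2 (r x y z) - r x y z * Real.logb 2 (s3 z))
        ≤ ∑ x, ∑ y, ∑ z, (s1 x z * s2 y z * (s3 z)⁻¹ - r x y z) / Real.log 2 := by
          refine Finset.sum_le_sum fun x _ => Finset.sum_le_sum fun y _ =>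
            Finset.sum_le_sum fun z _ => ?_
          refine key_pt _ _ _ _ (hr x y z) ?_ ?_ ?_ (hs1n x z) (hs2n y z)
          · exact Finset.single_le_sum (fun y' _ => hr x y' z) (Finset.mem_univ y)
          · exact Finset.single_le_sum (fun x' _ => hr x' y z) (Finset.mem_univ x)
          · rw [← hs3_alt1 z]
            exact Finset.single_le_sum (fun x' _ => hs1n x' z) (Finset.mem_univ x)
      _ = 0 := by
          simp only [← Finset.sum_div]
          rw [hzero, zero_div]
  have split : ∑ x, ∑ y, ∑ z,
      (r x y z * Real.logb 2 (s1 x z) + r x y z * Real.logb 2 (s2 y z)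
        - r x y z * Real.logb 2 (r x y z) - r x y z * Real.logb 2 (s3 z))
      = (∑ x, ∑ y, ∑ z, r x y z * Real.logb 2 (s1 x z))
        + (∑ x, ∑ y, ∑ z, r x y z * Real.logb 2 (s2 y z))
        - (∑ x, ∑ y, ∑ z, r x y z * Real.logb 2 (r x y z))
        - (∑ x, ∑ y, ∑ z, r x y z * Real.logb 2 (s3 z)) := by
    simp only [Finset.sum_add_distrib, Finset.sum_sub_distrib]
  linarith [e1, e2, e3, main, split]

lemma prob_marg1 {Ω : Type*} [Fintype Ω] {α β γ : Type*} [Fintype β] [DecidableEq α]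
    [DecidableEq β] [DecidableEq γ] (p : Ω → ℝ) (X : Ω → α) (Y : Ω → β) (Z : Ω → γ)
    (x : α) (z : γ) :
    prob p (fun ω => (X ω, Z ω)) (x, z)
      = ∑ y, prob p (fun ω => (X ω, Y ω, Z ω)) (x, y, z) := by
  unfold prob
  rw [Finset.sum_comm]
  refine Finset.sum_congr rfl fun ω _ => ?_
  simp only [Prod.ext_iff]
  rcases eq_or_ne (X ω) x with h1 | h1 <;> rcases eq_or_ne (Z ω) z with h2 | h2 <;>
    simp [h1, h2, Finset.sum_ite_eq']

lemma prob_marg2 {Ω : Type*} [Fintype Ω] {α β γ : Type*} [Fintype α] [DecidableEq α]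
    [DecidableEq β] [DecidableEq γ] (p : Ω → ℝ) (X : Ω → α) (Y : Ω → β) (Z : Ω → γ)
    (y : β) (z : γ) :
    prob p (fun ω => (Y ω, Z ω)) (y, z)
      = ∑ x, prob p (fun ω => (X ω, Y ω, Z ω)) (x, y, z) := by
  unfold prob
  rw [Finset.sum_comm]
  refine Finset.sum_congr rfl fun ω _ => ?_
  simp only [Prod.ext_iff]
  rcases eq_or_ne (Y ω) y with h1 | h1 <;> rcases eq_or_ne (Z ω) z with h2 | h2 <;>
    simp [h1, h2, Finset.sum_ite_eq']

lemma prob_marg3 {Ω : Type*} [Fintype Ω] {α β γ : Type*} [Fintype α] [Fintype β]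
    [DecidableEq α] [DecidableEq β] [DecidableEq γ]
    (p : Ω → ℝ) (X : Ω → α) (Y : Ω → β) (Z : Ω → γ) (z : γ) :
    prob p Z z = ∑ x, ∑ y, prob p (fun ω => (X ω, Y ω, Z ω)) (x, y, z) := by
  unfold prob
  calc (∑ ω, if Z ω = z then p ω else 0)
      = ∑ ω, ∑ x, ∑ y, (if (X ω, Y ω, Z ω) = (x, y, z) then p ω else 0) := by
        refine Finset.sum_congr rfl fun ω _ => ?_
        simp only [Prod.ext_iff]
        rcases eq_or_ne (Z ω) z with h | h <;> simp [h, ite_and, Finset.sum_ite_eq']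
    _ = ∑ x, ∑ ω, ∑ y, (if (X ω, Y ω, Z ω) = (x, y, z) then p ω else 0) := Finset.sum_comm
    _ = ∑ x, ∑ y, ∑ ω, (if (X ω, Y ω, Z ω) = (x, y, z) then p ω else 0) :=
        Finset.sum_congr rfl fun x _ => Finset.sum_comm

lemma cmi_nonneg {Ω : Type*} [Fintype Ω] {α β γ : Type*} [Fintype α] [DecidableEq α]
    [Fintype β] [DecidableEq β] [Fintype γ] [DecidableEq γ]
    (p : Ω → ℝ) (hp : ∀ ω, 0 ≤ p ω) (X : Ω → α) (Y : Ω → β) (Z : Ω → γ) :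
    0 ≤ cmi p X Y Z := by
  classical
  set r : α → β → γ → ℝ := fun x y z => prob p (fun ω => (X ω, Y ω, Z ω)) (x, y, z) with hrdef
  have hr : ∀ x y z, 0 ≤ r x y z := fun x y z => prob_nonneg' p hp _ _
  have h1 : ent p (fun ω => (X ω, Z ω))
      = -∑ x, ∑ z, (∑ y, r x y z) * Real.logb 2 (∑ y, r x y z) := by
    unfold ent
    rw [Fintype.sum_prod_type]
    refine congrArg Neg.neg (Finset.sum_congr rfl fun x _ => Finset.sum_congr rfl fun z _ => ?_)
    rw [prob_marg1 p X Y Z x z]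
  have h2 : ent p (fun ω => (Y ω, Z ω))
      = -∑ y, ∑ z, (∑ x, r x y z) * Real.logb 2 (∑ x, r x y z) := by
    unfold ent
    rw [Fintype.sum_prod_type]
    refine congrArg Neg.neg (Finset.sum_congr rfl fun y _ => Finset.sum_congr rfl fun z _ => ?_)
    rw [prob_marg2 p X Y Z y z]
  have h3 : ent p (fun ω => (X ω, Y ω, Z ω))
      = -∑ x, ∑ y, ∑ z, r x y z * Real.logb 2 (r x y z) := by
    unfold ent
    rw [Fintype.sum_prod_type]
    refine congrArg Neg.neg (Finset.sum_congr rfl fun x _ => ?_)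
    rw [Fintype.sum_prod_type]
  have h4 : ent p Z
      = -∑ z, (∑ x, ∑ y, r x y z) * Real.logb 2 (∑ x, ∑ y, r x y z) := by
    unfold ent
    refine congrArg Neg.neg (Finset.sum_congr rfl fun z _ => ?_)
    rw [prob_marg3 p X Y Z z]
  have := key_sum r hr
  unfold cmi
  rw [h1, h2, h3, h4]
  linarith

theorem stmt5 {Ω : Type*} [Fintype Ω] {α β γ δ : Type*}
    [Fintype α] [DecidableEq α] [Fintype β] [DecidableEq β]
    [Fintype γ] [DecidableEq γ] [Fintype δ] [DecidableEq δ]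
    (p : Ω → ℝ) (hp : ∀ ω, 0 ≤ p ω) (hsum : ∑ ω, p ω = 1)
    (A : Ω → α) (B : Ω → β) (C : Ω → γ) (D : Ω → δ)
    (h1 : cmi p B D (fun ω => (C ω, A ω)) = 0)
    (h2 : mi p A C ≥ cmi p A C B) :
    mi p A (fun ω => (C ω, D ω)) ≥ cmi p A (fun ω => (C ω, D ω)) B := by
  have h3 := cmi_nonneg p hp B D C
  simp only [mi, cmi] at h1 h2 h3 ⊢
  have q1 : ent p (fun ω => (D ω, C ω)) = ent p (fun ω => (C ω, D ω)) := by
    simpa using ent_inj p (fun t : γ × δ => (t.2, t.1)) (by intro a b h; simp only [Prod.ext_iff] at h ⊢; tauto) (fun ω => (C ω, D ω))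
  have q2 : ent p (fun ω => (D ω, C ω, A ω)) = ent p (fun ω => (A ω, C ω, D ω)) := by
    simpa using ent_inj p (fun t : α × γ × δ => (t.2.2, t.2.1, t.1)) (by intro a b h; simp only [Prod.ext_iff] at h ⊢; tauto) (fun ω => (A ω, C ω, D ω))
  have q3 : ent p (fun ω => (B ω, D ω, C ω)) = ent p (fun ω => ((C ω, D ω), B ω)) := by
    simpa using ent_inj p (fun t : (γ × δ) × β => (t.2, t.1.2, t.1.1)) (by intro a b h; simp only [Prod.ext_iff] at h ⊢; tauto) (fun ω => ((C ω, D ω), B ω))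
  have q4 : ent p (fun ω => (B ω, D ω, C ω, A ω)) = ent p (fun ω => (A ω, (C ω, D ω), B ω)) := by
    simpa using ent_inj p (fun t : α × (γ × δ) × β => (t.2.2, t.2.1.2, t.2.1.1, t.1)) (by intro a b h; simp only [Prod.ext_iff] at h ⊢; tauto) (fun ω => (A ω, (C ω, D ω), B ω))
  have q5 : ent p (fun ω => (C ω, A ω)) = ent p (fun ω => (A ω, C ω)) := by
    simpa using ent_inj p (fun t : α × γ => (t.2, t.1)) (by intro a b h; simp only [Prod.ext_iff] at h ⊢; tauto) (fun ω => (A ω, C ω))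
  have q6 : ent p (fun ω => (B ω, C ω)) = ent p (fun ω => (C ω, B ω)) := by
    simpa using ent_inj p (fun t : γ × β => (t.2, t.1)) (by intro a b h; simp only [Prod.ext_iff] at h ⊢; tauto) (fun ω => (C ω, B ω))
  have q7 : ent p (fun ω => (B ω, C ω, A ω)) = ent p (fun ω => (A ω, C ω, B ω)) := by
    simpa using ent_inj p (fun t : α × γ × β => (t.2.2, t.2.1, t.1)) (by intro a b h; simp only [Prod.ext_iff] at h ⊢; tauto) (fun ω => (A ω, C ω, B ω))
  linarith [q1, q2, q3, q4, q5, q6, q7, h1, h2, h3]
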